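/- Let G be a nontrivial uniquely C4+-saturated graph with girth 3, and let S be the vertex set of a triangle in G. If every vertex of G is in S or adjacent to a vertex of S, then G is isomorphic to C3*, the graph consisting of a triangle with one pendant edge attached. -/

import Mathlib

open SimpleGraph

/-- The diamond graph `C₄⁺`: a `4`-cycle with one chord, i.e. `K₄` minus an edge. -/
def diamond : SimpleGraph (Fin 4) := (⊤ : SimpleGraph (Fin 4)).deleteEdges {s(0, 1)}

/-- `G'` is a copy of `H` in `G`, i.e. a subgraph of `G` isomorphic to `H`. -/
def IsCopy {W V : Type*} (H : SimpleGraph W) {G : SimpleGraph V} (G' : G.Subgraph) : Prop :=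
  Nonempty (G'.coe ≃g H)

/-- `G` is uniquely `H`-saturated: `G` is `H`-free, and adding any non-edge
creates exactly one copy of `H`. -/
def UniquelySaturated {W V : Type*} (H : SimpleGraph W) (G : SimpleGraph V) : Prop :=
  (∀ G' : G.Subgraph, ¬ IsCopy H G') ∧
    ∀ u v : V, u ≠ v → ¬ G.Adj u v →
      ∃! G' : (G ⊔ SimpleGraph.fromEdgeSet {s(u, v)}).Subgraph, IsCopy H G'

/-- `C₃*`: a triangle with one pendant edge. -/
def C3star : SimpleGraph (Fin 4) :=
  SimpleGraph.fromEdgeSet {s(0, 1), s(0, 2), s(1, 2), s(2, 3)}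

lemma diamond_adj {i j : Fin 4} :
    diamond.Adj i j ↔ i ≠ j ∧ ¬(i = 0 ∧ j = 1) ∧ ¬(i = 1 ∧ j = 0) := by
  simp only [diamond, deleteEdges_adj, top_adj, Set.mem_singleton_iff, Sym2.eq_iff]
  tauto

lemma c3star_adj {i j : Fin 4} :
    C3star.Adj i j ↔ ((i = 0 ∧ j = 1) ∨ (i = 1 ∧ j = 0) ∨ (i = 0 ∧ j = 2) ∨ (i = 2 ∧ j = 0) ∨
      (i = 1 ∧ j = 2) ∨ (i = 2 ∧ j = 1) ∨ (i = 2 ∧ j = 3) ∨ (i = 3 ∧ j = 2)) := by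
  simp only [C3star, fromEdgeSet_adj, Set.mem_insert_iff, Set.mem_singleton_iff, Sym2.eq_iff]
  constructor
  · rintro ⟨h, -⟩
    tauto
  · rintro (⟨rfl, rfl⟩ | ⟨rfl, rfl⟩ | ⟨rfl, rfl⟩ | ⟨rfl, rfl⟩ | ⟨rfl, rfl⟩ | ⟨rfl, rfl⟩ |
      ⟨rfl, rfl⟩ | ⟨rfl, rfl⟩) <;> exact ⟨by tauto, by decide⟩

lemma pattern_of_copy {V : Type*} {H : SimpleGraph V} {G' : H.Subgraph} (h : IsCopy diamond G') :
    ∃ a b c d : V, a ≠ b ∧ a ≠ c ∧ a ≠ d ∧ b ≠ c ∧ b ≠ d ∧ c ≠ d ∧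
      H.Adj a c ∧ H.Adj a d ∧ H.Adj b c ∧ H.Adj b d ∧ H.Adj c d := by
  obtain ⟨e⟩ := h
  have hinj : ∀ i j : Fin 4, i ≠ j → ((e.symm i : G'.verts) : V) ≠ ((e.symm j : G'.verts) : V) := by
    intro i j hij hv
    exact hij (e.symm.injective (Subtype.ext hv))
  have hadj : ∀ i j : Fin 4, diamond.Adj i j → H.Adj (e.symm i) (e.symm j) := by
    intro i j hij
    have h2 : G'.coe.Adj (e.symm i) (e.symm j) := e.symm.map_rel_iff.mpr hij
    exact h2.adj_sub
  exact ⟨e.symm 0, e.symm 1, e.symm 2, e.symm 3,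
    hinj 0 1 (by decide), hinj 0 2 (by decide), hinj 0 3 (by decide),
    hinj 1 2 (by decide), hinj 1 3 (by decide), hinj 2 3 (by decide),
    hadj 0 2 (by rw [diamond_adj]; decide), hadj 0 3 (by rw [diamond_adj]; decide),
    hadj 1 2 (by rw [diamond_adj]; decide), hadj 1 3 (by rw [diamond_adj]; decide),
    hadj 2 3 (by rw [diamond_adj]; decide)⟩

lemma copy_of_pattern {V : Type*} {H : SimpleGraph V} {a b c d : V}
    (hab : a ≠ b) (hac : a ≠ c) (had : a ≠ d) (hbc : b ≠ c) (hbd : b ≠ d) (hcd : c ≠ d)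
    (h1 : H.Adj a c) (h2 : H.Adj a d) (h3 : H.Adj b c) (h4 : H.Adj b d) (h5 : H.Adj c d) :
    ∃ G' : H.Subgraph, IsCopy diamond G' ∧ G'.verts = {a, b, c, d} := by
  classical
  refine ⟨{ verts := {a, b, c, d}
            Adj := fun u v => s(u, v) ∈ ({s(a,c), s(a,d), s(b,c), s(b,d), s(c,d)} : Set (Sym2 V))
            adj_sub := ?_
            edge_vert := ?_
            symm := ?_ }, ?_, rfl⟩
  · intro u v h
    simp only [Set.mem_insert_iff, Set.mem_singleton_iff, Sym2.eq_iff] at h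
    rcases h with (⟨rfl,rfl⟩|⟨rfl,rfl⟩)|(⟨rfl,rfl⟩|⟨rfl,rfl⟩)|(⟨rfl,rfl⟩|⟨rfl,rfl⟩)|(⟨rfl,rfl⟩|⟨rfl,rfl⟩)|(⟨rfl,rfl⟩|⟨rfl,rfl⟩) <;>
      first | assumption | exact h1.symm | exact h2.symm | exact h3.symm | exact h4.symm | exact h5.symm
  · intro u v h
    simp only [Set.mem_insert_iff, Set.mem_singleton_iff, Sym2.eq_iff] at h
    rcases h with (⟨rfl,rfl⟩|⟨rfl,rfl⟩)|(⟨rfl,rfl⟩|⟨rfl,rfl⟩)|(⟨rfl,rfl⟩|⟨rfl,rfl⟩)|(⟨rfl,rfl⟩|⟨rfl,rfl⟩)|(⟨rfl,rfl⟩|⟨rfl,rfl⟩) <;>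
      simp
  · constructor; intro u v h
    have hsw : s(v, u) = s(u, v) := Sym2.eq_swap
    rw [hsw]; exact h
  have mem_a : a ∈ ({a,b,c,d} : Set V) := by simp
  have mem_b : b ∈ ({a,b,c,d} : Set V) := by simp
  have mem_c : c ∈ ({a,b,c,d} : Set V) := by simp
  have mem_d : d ∈ ({a,b,c,d} : Set V) := by simp
  set f : Fin 4 → ({a,b,c,d} : Set V) := ![⟨a, mem_a⟩, ⟨b, mem_b⟩, ⟨c, mem_c⟩, ⟨d, mem_d⟩] with hf
  have hbij : Function.Bijective f := by
    constructor
    · intro i j hij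
      rw [Subtype.ext_iff] at hij
      fin_cases i <;> fin_cases j <;>
        simp only [hf, Matrix.cons_val_zero, Matrix.cons_val_one, Matrix.head_cons,
          Matrix.cons_val_succ] at hij <;>
        first
          | rfl
          | exact absurd hij hab | exact absurd hij hac | exact absurd hij had
          | exact absurd hij hbc | exact absurd hij hbd | exact absurd hij hcd
          | exact absurd hij hab.symm | exact absurd hij hac.symm | exact absurd hij had.symm
          | exact absurd hij hbc.symm | exact absurd hij hbd.symm | exact absurd hij hcd.symm
    · rintro ⟨p, hp⟩
      simp only [Set.mem_insert_iff, Set.mem_singleton_iff] at hp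
      obtain rfl|rfl|rfl|rfl := hp
      exacts [⟨0, rfl⟩, ⟨1, rfl⟩, ⟨2, rfl⟩, ⟨3, rfl⟩]
  refine ⟨(SimpleGraph.Iso.symm ⟨Equiv.ofBijective f hbij, ?_⟩ : _ ≃g diamond)⟩
  intro i j
  show _ ↔ diamond.Adj i j
  simp only [Equiv.ofBijective_apply, Subgraph.coe_adj]
  fin_cases i <;> fin_cases j <;>
    simp [hf, Matrix.cons_val_zero, Matrix.cons_val_one, Matrix.head_cons, Matrix.cons_val_succ,
      diamond_adj, Sym2.eq_iff, hab, hac, had, hbc, hbd, hcd,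
      hab.symm, hac.symm, had.symm, hbc.symm, hbd.symm, hcd.symm]

lemma two_diamonds {V : Type*} {H : SimpleGraph V}
    (hu : ∃! G' : H.Subgraph, IsCopy diamond G')
    {a b c d a' b' c' d' : V}
    (n1 : a ≠ b) (n2 : a ≠ c) (n3 : a ≠ d) (n4 : b ≠ c) (n5 : b ≠ d) (n6 : c ≠ d)
    (e1 : H.Adj a c) (e2 : H.Adj a d) (e3 : H.Adj b c) (e4 : H.Adj b d) (e5 : H.Adj c d)
    (m1 : a' ≠ b') (m2 : a' ≠ c') (m3 : a' ≠ d') (m4 : b' ≠ c') (m5 : b' ≠ d') (m6 : c' ≠ d')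
    (f1 : H.Adj a' c') (f2 : H.Adj a' d') (f3 : H.Adj b' c') (f4 : H.Adj b' d') (f5 : H.Adj c' d')
    (hb1 : b ≠ a') (hb2 : b ≠ b') (hb3 : b ≠ c') (hb4 : b ≠ d') : False := by
  obtain ⟨G0, -, huniq⟩ := hu
  obtain ⟨G1, hc1, hv1⟩ := copy_of_pattern n1 n2 n3 n4 n5 n6 e1 e2 e3 e4 e5
  obtain ⟨G2, hc2, hv2⟩ := copy_of_pattern m1 m2 m3 m4 m5 m6 f1 f2 f3 f4 f5
  have h12 : G1 = G2 := (huniq G1 hc1).trans (huniq G2 hc2).symm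
  have hbmem : b ∈ G1.verts := by rw [hv1]; simp
  rw [h12, hv2] at hbmem
  simp only [Set.mem_insert_iff, Set.mem_singleton_iff] at hbmem
  rcases hbmem with h|h|h|h
  exacts [hb1 h, hb2 h, hb3 h, hb4 h]

lemma iso_c3star {V : Type*} {G : SimpleGraph V} {a b c x : V}
    (hab : G.Adj a b) (hac : G.Adj a c) (hbc : G.Adj b c) (hcx : G.Adj c x)
    (hax : ¬ G.Adj a x) (hbx : ¬ G.Adj b x)
    (hxa : x ≠ a) (hxb : x ≠ b)
    (hcov : ∀ p : V, p = a ∨ p = b ∨ p = c ∨ p = x) :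
    Nonempty (G ≃g C3star) := by
  classical
  have hxa' : ¬ G.Adj x a := fun h => hax h.symm
  have hxb' : ¬ G.Adj x b := fun h => hbx h.symm
  set f : Fin 4 → V := ![a, b, c, x] with hf
  have hbij : Function.Bijective f := by
    constructor
    · intro i j hij
      fin_cases i <;> fin_cases j <;>
        simp only [hf, Matrix.cons_val_zero, Matrix.cons_val_one, Matrix.head_cons,
          Matrix.cons_val_succ] at hij <;>
        first
          | rfl
          | exact absurd hij hab.ne | exact absurd hij hac.ne | exact absurd hij hbc.ne
          | exact absurd hij hab.ne' | exact absurd hij hac.ne' | exact absurd hij hbc.ne'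
          | exact absurd hij hxa.symm | exact absurd hij hxb.symm | exact absurd hij hcx.ne
          | exact absurd hij hxa | exact absurd hij hxb | exact absurd hij hcx.ne'
    · intro p
      rcases hcov p with rfl|rfl|rfl|rfl
      exacts [⟨0, rfl⟩, ⟨1, rfl⟩, ⟨2, rfl⟩, ⟨3, rfl⟩]
  refine ⟨(⟨Equiv.ofBijective f hbij, ?_⟩ : C3star ≃g G).symm⟩
  intro i j
  show G.Adj _ _ ↔ C3star.Adj i j
  simp only [Equiv.ofBijective_apply]
  fin_cases i <;> fin_cases j <;>
    simp [hf, Matrix.cons_val_zero, Matrix.cons_val_one, Matrix.head_cons, Matrix.cons_val_succ,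
      c3star_adj, hab, hac, hbc, hcx, hab.symm, hac.symm, hbc.symm, hcx.symm,
      hax, hbx, hxa', hxb']

theorem stmt6 {V : Type*} [Fintype V] (G : SimpleGraph V)
    (hcard : 4 ≤ Fintype.card V) (hsat : UniquelySaturated diamond G)
    (hgirth : G.girth = 3)
    (v1 v2 v3 : V) (h12 : G.Adj v1 v2) (h13 : G.Adj v1 v3) (h23 : G.Adj v2 v3)
    (hdom : ∀ v : V, v ∈ ({v1, v2, v3} : Set V) ∨ G.Adj v v1 ∨ G.Adj v v2 ∨ G.Adj v v3) :
    Nonempty (G ≃g C3star) := by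
  classical
  obtain ⟨hfree, hadd⟩ := hsat
  -- G contains no "diamond pattern"
  have hpat : ∀ a b c d : V, a ≠ b → a ≠ c → a ≠ d → b ≠ c → b ≠ d → c ≠ d →
      G.Adj a c → G.Adj a d → G.Adj b c → G.Adj b d → G.Adj c d → False := by
    intro a b c d n1 n2 n3 n4 n5 n6 k1 k2 k3 k4 k5
    obtain ⟨G', hc, -⟩ := copy_of_pattern n1 n2 n3 n4 n5 n6 k1 k2 k3 k4 k5
    exact hfree G' hc
  -- no vertex is adjacent to two vertices of a triangle
  have hB : ∀ x p q r : V, G.Adj p q → G.Adj p r → G.Adj q r →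
      x ≠ p → x ≠ q → x ≠ r → G.Adj x p → G.Adj x q → False := by
    intro x p q r hpq hpr hqr hxp hxq hxr hk1 hk2
    exact hpat x r p q hxr hxp hxq hpr.ne' hqr.ne' hpq.ne hk1 hk2 hpr.symm hqr.symm hpq
  -- adjacency in G plus one new edge
  have hsup : ∀ (u v p q : V), G.Adj p q → (G ⊔ fromEdgeSet {s(u, v)}).Adj p q := by
    intro u v p q h
    exact Or.inl h
  have hnewadj : ∀ (u v : V), u ≠ v → (G ⊔ fromEdgeSet {s(u, v)}).Adj u v := by
    intro u v huv
    exact Or.inr (by simp [fromEdgeSet_adj, huv])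
  have hsupcases : ∀ (u v p q : V), (G ⊔ fromEdgeSet {s(u, v)}).Adj p q →
      G.Adj p q ∨ (p = u ∧ q = v) ∨ (p = v ∧ q = u) := by
    intro u v p q h
    rcases h with h | h
    · exact Or.inl h
    · right
      simp only [fromEdgeSet_adj, Set.mem_singleton_iff, Sym2.eq_iff] at h
      tauto
  -- two outside vertices attached to the same triangle vertex cannot be adjacent
  have hCsame : ∀ x y u v w : V, G.Adj u v → G.Adj u w → G.Adj v w →
      x ≠ u → x ≠ v → x ≠ w → y ≠ u → y ≠ v → y ≠ w →
      G.Adj x y → G.Adj x v → G.Adj y v → ¬ G.Adj x u → False := by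
    intro x y u v w huv huw hvw hxu hxv hxw hyu hyv hyw hxy hxv' hyv' hnadj
    refine two_diamonds (hadd x u hxu hnadj)
      (a := x) (b := w) (c := u) (d := v) (a' := y) (b' := u) (c' := x) (d' := v)
      hxw hxu hxv huw.ne' hvw.ne' huv.ne
      (hnewadj x u hxu) (hsup _ _ _ _ hxv') (hsup _ _ _ _ huw.symm) (hsup _ _ _ _ hvw.symm)
      (hsup _ _ _ _ huv)
      hyu hxy.ne' hyv hxu.symm huv.ne hxv
      (hsup _ _ _ _ hxy.symm) (hsup _ _ _ _ hyv') (hnewadj x u hxu).symm (hsup _ _ _ _ huv)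
      (hsup _ _ _ _ hxv')
      (fun h => hyw h.symm) huw.ne' hxw.symm hvw.ne'
  -- two adjacent outside vertices attached to different triangle vertices: impossible
  have hCdiff : ∀ x y u v w : V, G.Adj u v → G.Adj u w → G.Adj v w →
      x ≠ u → x ≠ v → x ≠ w → y ≠ u → y ≠ v → y ≠ w →
      G.Adj x y → G.Adj x v → G.Adj y u → ¬ G.Adj x u → False := by
    intro x y u v w huv huw hvw hxu hxv hxw hyu hyv hyw hxy hxv' hyu' hnadj
    refine two_diamonds (hadd x u hxu hnadj)
      (a := x) (b := w) (c := u) (d := v) (a' := y) (b' := v) (c' := x) (d' := u)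
      hxw hxu hxv huw.ne' hvw.ne' huv.ne
      (hnewadj x u hxu) (hsup _ _ _ _ hxv') (hsup _ _ _ _ huw.symm) (hsup _ _ _ _ hvw.symm)
      (hsup _ _ _ _ huv)
      hyv hxy.ne' hyu hxv.symm huv.ne' hxu
      (hsup _ _ _ _ hxy.symm) (hsup _ _ _ _ hyu') (hsup _ _ _ _ hxv'.symm)
      (hsup _ _ _ _ huv.symm) (hnewadj x u hxu)
      (fun h => hyw h.symm) hvw.ne' hxw.symm huw.ne'
  -- no edges between outside vertices
  have hC : ∀ x y : V, x ≠ v1 → x ≠ v2 → x ≠ v3 → y ≠ v1 → y ≠ v2 → y ≠ v3 →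
      ¬ G.Adj x y := by
    intro x y hx1 hx2 hx3 hy1 hy2 hy3 hxy
    have hx := hdom x
    have hy := hdom y
    simp only [Set.mem_insert_iff, Set.mem_singleton_iff, hx1, hx2, hx3, hy1, hy2, hy3,
      or_self, false_or] at hx hy
    have nx1 : G.Adj x v1 → ¬ G.Adj x v2 := fun h h' => hB x v1 v2 v3 h12 h13 h23 hx1 hx2 hx3 h h'
    have nx2 : G.Adj x v1 → ¬ G.Adj x v3 := fun h h' => hB x v1 v3 v2 h13 h12 h23.symm hx1 hx3 hx2 h h'
    have nx3 : G.Adj x v2 → ¬ G.Adj x v1 := fun h h' => hB x v2 v1 v3 h12.symm h23 h13 hx2 hx1 hx3 h h'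
    have nx4 : G.Adj x v2 → ¬ G.Adj x v3 := fun h h' => hB x v2 v3 v1 h23 h12.symm h13.symm hx2 hx3 hx1 h h'
    have nx5 : G.Adj x v3 → ¬ G.Adj x v1 := fun h h' => hB x v3 v1 v2 h13.symm h23.symm h12 hx3 hx1 hx2 h h'
    have nx6 : G.Adj x v3 → ¬ G.Adj x v2 := fun h h' => hB x v3 v2 v1 h23.symm h13.symm h12.symm hx3 hx2 hx1 h h'
    rcases hx with hxa | hxa | hxa <;> rcases hy with hya | hya | hya
    · -- both at v1 : v = v1, u = v2, w = v3
      exact hCsame x y v2 v1 v3 h12.symm h23 h13 hx2 hx1 hx3 hy2 hy1 hy3 hxy hxa hya (nx1 hxa)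
    · -- x at v1, y at v2 : v = v1, u = v2, w = v3
      exact hCdiff x y v2 v1 v3 h12.symm h23 h13 hx2 hx1 hx3 hy2 hy1 hy3 hxy hxa hya (nx1 hxa)
    · -- x at v1, y at v3 : v = v1, u = v3, w = v2
      exact hCdiff x y v3 v1 v2 h13.symm h23.symm h12 hx3 hx1 hx2 hy3 hy1 hy2 hxy hxa hya (nx2 hxa)
    · -- x at v2, y at v1 : v = v2, u = v1, w = v3
      exact hCdiff x y v1 v2 v3 h12 h13 h23 hx1 hx2 hx3 hy1 hy2 hy3 hxy hxa hya (nx3 hxa)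
    · -- both at v2 : v = v2, u = v1, w = v3
      exact hCsame x y v1 v2 v3 h12 h13 h23 hx1 hx2 hx3 hy1 hy2 hy3 hxy hxa hya (nx3 hxa)
    · -- x at v2, y at v3 : v = v2, u = v3, w = v1
      exact hCdiff x y v3 v2 v1 h23.symm h13.symm h12.symm hx3 hx2 hx1 hy3 hy2 hy1 hxy hxa hya (nx4 hxa)
    · -- x at v3, y at v1 : v = v3, u = v1, w = v2
      exact hCdiff x y v1 v3 v2 h13 h12 h23.symm hx1 hx3 hx2 hy1 hy3 hy2 hxy hxa hya (nx5 hxa)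
    · -- x at v3, y at v2 : v = v3, u = v2, w = v1
      exact hCdiff x y v2 v3 v1 h23 h12.symm h13.symm hx2 hx3 hx1 hy2 hy3 hy1 hxy hxa hya (nx6 hxa)
    · -- both at v3 : v = v3, u = v1, w = v2
      exact hCsame x y v1 v3 v2 h13 h12 h23.symm hx1 hx3 hx2 hy1 hy3 hy2 hxy hxa hya (nx5 hxa)
  -- each outside vertex has a unique neighbour
  have hone : ∀ z : V, z ≠ v1 → z ≠ v2 → z ≠ v3 →
      ∃ w0, G.Adj z w0 ∧ ∀ p, G.Adj z p → p = w0 := by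
    intro z hz1 hz2 hz3
    have hz := hdom z
    simp only [Set.mem_insert_iff, Set.mem_singleton_iff, hz1, hz2, hz3, or_self,
      false_or] at hz
    have houts : ∀ p : V, p ≠ v1 → p ≠ v2 → p ≠ v3 → G.Adj z p → False := by
      intro p hp1 hp2 hp3 hp
      exact absurd hp (hC z p hz1 hz2 hz3 hp1 hp2 hp3)
    rcases hz with h | h | h
    · refine ⟨v1, h, fun p hp => ?_⟩
      by_cases hp1 : p = v1
      · exact hp1
      by_cases hp2 : p = v2
      · exact (hB z v1 v2 v3 h12 h13 h23 hz1 hz2 hz3 h (by rwa [hp2] at hp)).elim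
      by_cases hp3 : p = v3
      · exact (hB z v1 v3 v2 h13 h12 h23.symm hz1 hz3 hz2 h (by rwa [hp3] at hp)).elim
      exact (houts p hp1 hp2 hp3 hp).elim
    · refine ⟨v2, h, fun p hp => ?_⟩
      by_cases hp2 : p = v2
      · exact hp2
      by_cases hp1 : p = v1
      · exact (hB z v2 v1 v3 h12.symm h23 h13 hz2 hz1 hz3 h (by rwa [hp1] at hp)).elim
      by_cases hp3 : p = v3
      · exact (hB z v2 v3 v1 h23 h12.symm h13.symm hz2 hz3 hz1 h (by rwa [hp3] at hp)).elim
      exact (houts p hp1 hp2 hp3 hp).elim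
    · refine ⟨v3, h, fun p hp => ?_⟩
      by_cases hp3 : p = v3
      · exact hp3
      by_cases hp1 : p = v1
      · exact (hB z v3 v1 v2 h13.symm h23.symm h12 hz3 hz1 hz2 h (by rwa [hp1] at hp)).elim
      by_cases hp2 : p = v2
      · exact (hB z v3 v2 v1 h23.symm h13.symm h12.symm hz3 hz2 hz1 h (by rwa [hp2] at hp)).elim
      exact (houts p hp1 hp2 hp3 hp).elim
  -- there is at most one outside vertex
  have hD : ∀ x y : V, x ≠ v1 → x ≠ v2 → x ≠ v3 → y ≠ v1 → y ≠ v2 → y ≠ v3 →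
      x ≠ y → False := by
    intro x y hx1 hx2 hx3 hy1 hy2 hy3 hxyne
    have hnxy : ¬ G.Adj x y := hC x y hx1 hx2 hx3 hy1 hy2 hy3
    obtain ⟨G0, hG0, -⟩ := hadd x y hxyne hnxy
    obtain ⟨a, b, c, d, d1, d2, d3, d4, d5, d6, e1, e2, e3, e4, e5⟩ := pattern_of_copy hG0
    -- bound on neighbourhoods of x and y in G + xy
    have hnb : ∀ z : V, (z = x ∨ z = y) → ∀ n1 n2 n3 : V, n1 ≠ n2 → n1 ≠ n3 → n2 ≠ n3 →
        (G ⊔ fromEdgeSet {s(x, y)}).Adj z n1 → (G ⊔ fromEdgeSet {s(x, y)}).Adj z n2 →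
        (G ⊔ fromEdgeSet {s(x, y)}).Adj z n3 → False := by
      rintro z hz n1 n2 n3 hn12 hn13 hn23 ha1 ha2 ha3
      rcases hz with rfl | rfl
      · obtain ⟨w0, hw0, hwuniq⟩ := hone z hx1 hx2 hx3
        have hmem : ∀ n, (G ⊔ fromEdgeSet {s(z, y)}).Adj z n → n = w0 ∨ n = y := by
          intro n h
          rcases hsupcases z y z n h with h | ⟨-, rfl⟩ | ⟨h1, -⟩
          · exact Or.inl (hwuniq n h)
          · exact Or.inr rfl
          · exact absurd h1 hxyne
        rcases hmem n1 ha1 with rfl | rfl <;> rcases hmem n2 ha2 with h' | h' <;>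
          rcases hmem n3 ha3 with h'' | h'' <;>
          first
            | exact hn12 h'.symm | exact hn13 h''.symm | exact hn23 (h'.trans h''.symm)
            | exact hn12 h'.symm | exact hn13 h''.symm
      · obtain ⟨w0, hw0, hwuniq⟩ := hone z hy1 hy2 hy3
        have hmem : ∀ n, (G ⊔ fromEdgeSet {s(x, z)}).Adj z n → n = w0 ∨ n = x := by
          intro n h
          rcases hsupcases x z z n h with h | ⟨h1, -⟩ | ⟨-, rfl⟩
          · exact Or.inl (hwuniq n h)
          · exact absurd h1.symm hxyne
          · exact Or.inr rfl
        rcases hmem n1 ha1 with rfl | rfl <;> rcases hmem n2 ha2 with h' | h' <;>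
          rcases hmem n3 ha3 with h'' | h'' <;>
          first
            | exact hn12 h'.symm | exact hn13 h''.symm | exact hn23 (h'.trans h''.symm)
    -- one of c, d is x or y
    have key : (c = x ∨ c = y) ∨ (d = x ∨ d = y) := by
      by_contra hk
      push_neg at hk
      obtain ⟨⟨hc1, hc2⟩, hd1, hd2⟩ := hk
      have gac : G.Adj a c := by
        rcases hsupcases x y a c e1 with h | ⟨-, h2⟩ | ⟨-, h2⟩
        exacts [h, absurd h2 hc2, absurd h2 hc1]
      have gad : G.Adj a d := by
        rcases hsupcases x y a d e2 with h | ⟨-, h2⟩ | ⟨-, h2⟩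
        exacts [h, absurd h2 hd2, absurd h2 hd1]
      have gbc : G.Adj b c := by
        rcases hsupcases x y b c e3 with h | ⟨-, h2⟩ | ⟨-, h2⟩
        exacts [h, absurd h2 hc2, absurd h2 hc1]
      have gbd : G.Adj b d := by
        rcases hsupcases x y b d e4 with h | ⟨-, h2⟩ | ⟨-, h2⟩
        exacts [h, absurd h2 hd2, absurd h2 hd1]
      have gcd : G.Adj c d := by
        rcases hsupcases x y c d e5 with h | ⟨h1, -⟩ | ⟨h1, -⟩
        exacts [h, absurd h1 hc1, absurd h1 hc2]
      exact hpat a b c d d1 d2 d3 d4 d5 d6 gac gad gbc gbd gcd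
    rcases key with hc | hd
    · exact hnb c hc a b d d1 d3 d5 e1.symm e3.symm e5
    · exact hnb d hd a b c d1 d2 d4 e2.symm e4.symm e5.symm
  -- there is an outside vertex
  have hout : ∃ x : V, x ≠ v1 ∧ x ≠ v2 ∧ x ≠ v3 := by
    by_contra hk
    push_neg at hk
    have hsub : (Finset.univ : Finset V) ⊆ {v1, v2, v3} := by
      intro p _
      by_cases h1 : p = v1
      · simp [h1]
      by_cases h2 : p = v2
      · simp [h2]
      have h3 := hk p h1 h2
      simp [h3]
    have hle := Finset.card_le_card hsub
    have t1 := Finset.card_insert_le v1 ({v2, v3} : Finset V)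
    have t2 := Finset.card_insert_le v2 ({v3} : Finset V)
    simp only [Finset.card_singleton] at t1 t2
    rw [Finset.card_univ] at hle
    omega
  obtain ⟨x, hx1, hx2, hx3⟩ := hout
  -- coverage
  have hcov : ∀ p : V, p = v1 ∨ p = v2 ∨ p = v3 ∨ p = x := by
    intro p
    by_contra hk
    push_neg at hk
    exact hD p x hk.1 hk.2.1 hk.2.2.1 hx1 hx2 hx3 hk.2.2.2
  obtain ⟨w0, hw0, hwuniq⟩ := hone x hx1 hx2 hx3
  have hw0T : w0 = v1 ∨ w0 = v2 ∨ w0 = v3 := by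
    rcases hcov w0 with h | h | h | rfl
    · exact Or.inl h
    · exact Or.inr (Or.inl h)
    · exact Or.inr (Or.inr h)
    · exact absurd hw0 (G.irrefl)
  rcases hw0T with h0 | h0 | h0 <;> rw [h0] at hw0 <;> simp only [h0] at hwuniq
  · -- pendant at v1 : a = v2, b = v3, c = v1
    refine iso_c3star (a := v2) (b := v3) (c := v1) (x := x) h23 h12.symm h13.symm hw0.symm
      (fun h => h12.ne' (hwuniq v2 h.symm)) (fun h => h13.ne' (hwuniq v3 h.symm)) hx2 hx3 ?_
    intro p
    rcases hcov p with rfl | rfl | rfl | rfl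
    · exact Or.inr (Or.inr (Or.inl rfl))
    · exact Or.inl rfl
    · exact Or.inr (Or.inl rfl)
    · exact Or.inr (Or.inr (Or.inr rfl))
  · -- pendant at v2 : a = v1, b = v3, c = v2
    refine iso_c3star (a := v1) (b := v3) (c := v2) (x := x) h13 h12 h23.symm hw0.symm
      (fun h => h12.ne (hwuniq v1 h.symm)) (fun h => h23.ne' (hwuniq v3 h.symm)) hx1 hx3 ?_
    intro p
    rcases hcov p with rfl | rfl | rfl | rfl
    · exact Or.inl rfl
    · exact Or.inr (Or.inr (Or.inl rfl))
    · exact Or.inr (Or.inl rfl)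
    · exact Or.inr (Or.inr (Or.inr rfl))
  · -- pendant at v3 : a = v1, b = v2, c = v3
    refine iso_c3star (a := v1) (b := v2) (c := v3) (x := x) h12 h13 h23 hw0.symm
      (fun h => h13.ne (hwuniq v1 h.symm)) (fun h => h23.ne (hwuniq v2 h.symm)) hx1 hx2 ?_
    intro p
    rcases hcov p with rfl | rfl | rfl | rfl
    · exact Or.inl rfl
    · exact Or.inr (Or.inl rfl)
    · exact Or.inr (Or.inr (Or.inl rfl))
    · exact Or.inr (Or.inr (Or.inr rfl))
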